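/- Let B be a Boolean algebra, δ an ordinal, and ⟨B_α : α ≤ δ⟩ an increasing chain of Boolean subalgebras of B that is continuous at limits (for limit β ≤ δ, B_β = ⋃_{α<β} B_α) with B_δ = B. Let I be an ideal of B, and for each α < δ let J_α ⊆ B_{α+1} be independent from B_α modulo I ∩ B_{α+1} in B_{α+1}. Then ⋃_{α<δ} J_α is independent from B₀ modulo I in B. -/

import Mathlib

/-- A subset of a Boolean algebra closed under the Boolean operations and containing `⊥`
and `⊤`. -/
def IsBooleanSubalgebra {B : Type*} [BooleanAlgebra B] (S : Set B) : Prop :=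
  ⊥ ∈ S ∧ ⊤ ∈ S ∧ (∀ a ∈ S, ∀ b ∈ S, a ⊓ b ∈ S) ∧ (∀ a ∈ S, ∀ b ∈ S, a ⊔ b ∈ S) ∧
    ∀ a ∈ S, aᶜ ∈ S

/-- The Boolean subalgebra of `B` generated by a subset `X`. -/
def genBA {B : Type*} [BooleanAlgebra B] (X : Set B) : Set B :=
  ⋂₀ {S : Set B | IsBooleanSubalgebra S ∧ X ⊆ S}

/-- An ideal of a Boolean algebra: a nonempty subset that is downward closed and closed
under binary joins. -/
def IsIdeal {B : Type*} [BooleanAlgebra B] (I : Set B) : Prop :=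
  I.Nonempty ∧ (∀ a b : B, a ≤ b → b ∈ I → a ∈ I) ∧ ∀ a ∈ I, ∀ b ∈ I, a ⊔ b ∈ I

/-- `Y` is independent from `X` modulo `I` in the Boolean algebra `B` : for all finite
disjoint subsets `F₁, F₂` of `Y` and every element `a` of the Boolean subalgebra generated
by `X` with `a ∉ I`, the element `(⨅ y ∈ F₁, y) ⊓ (⨅ y ∈ F₂, yᶜ) ⊓ a` is not in `I`. -/
def IndepFrom {B : Type*} [BooleanAlgebra B] (Y X I : Set B) : Prop :=
  ∀ F₁ F₂ : Finset B, ↑F₁ ⊆ Y → ↑F₂ ⊆ Y → Disjoint F₁ F₂ →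
    ∀ a ∈ genBA X, a ∉ I → (F₁.inf id ⊓ F₂.inf (fun y => yᶜ) ⊓ a) ∉ I

lemma genBA_subset {B : Type*} [BooleanAlgebra B] {X S : Set B}
    (hS : IsBooleanSubalgebra S) (hX : X ⊆ S) : genBA X ⊆ S :=
  Set.sInter_subset_of_mem ⟨hS, hX⟩

lemma subset_genBA {B : Type*} [BooleanAlgebra B] (X : Set B) : X ⊆ genBA X := by
  intro x hx S hS
  exact hS.2 hx

lemma inf_mem_sub {B : Type*} [BooleanAlgebra B] {S : Set B}
    (hS : IsBooleanSubalgebra S) (F : Finset B) (g : B → B)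
    (hg : ∀ y ∈ F, g y ∈ S) : F.inf g ∈ S := by
  classical
  induction F using Finset.induction_on with
  | empty => simpa using hS.2.1
  | insert _ _ hx ih =>
    rw [Finset.inf_insert]
    exact hS.2.2.1 _ (hg _ (Finset.mem_insert_self _ _)) _
      (ih fun y hy => hg y (Finset.mem_insert_of_mem hy))

/-- Transfinite transitivity of independence along a continuous increasing chain of
Boolean subalgebras: if at each successor step `J α ⊆ B (α+1)` is independent from `B α`
modulo `I ∩ B (α+1)`, then the union of the `J α` is independent from `B 0` modulo `I`. -/
theorem indepFrom_iUnion_chain {B : Type*} [BooleanAlgebra B]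
    (δ : Ordinal) (Bc : Ordinal → Set B)
    (hsub : ∀ α ≤ δ, IsBooleanSubalgebra (Bc α))
    (hmono : ∀ α β : Ordinal, α ≤ β → β ≤ δ → Bc α ⊆ Bc β)
    (hcont : ∀ β ≤ δ, Order.IsSuccLimit β → Bc β = ⋃ α ∈ Set.Iio β, Bc α)
    (htop : Bc δ = Set.univ)
    (I : Set B) (hI : IsIdeal I)
    (J : Ordinal → Set B)
    (hJsub : ∀ α < δ, J α ⊆ Bc (α + 1))
    (hJind : ∀ α < δ, IndepFrom (J α) (Bc α) (I ∩ Bc (α + 1))) :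
    IndepFrom (⋃ α ∈ Set.Iio δ, J α) (Bc 0) I := by
  classical
  have key : ∀ μ, μ ≤ δ → ∀ F₁ F₂ : Finset B, ∀ f : B → Ordinal,
      (∀ y ∈ F₁ ∪ F₂, f y < μ ∧ y ∈ J (f y)) → Disjoint F₁ F₂ →
      ∀ a ∈ Bc 0, a ∉ I → (F₁.inf id ⊓ F₂.inf (fun y => yᶜ) ⊓ a) ∉ I := by
    intro μ
    induction μ using Ordinal.induction with
    | h μ IH =>
      intro hμ F₁ F₂ f hf hdisj a ha haI
      rcases eq_or_ne (F₁ ∪ F₂) ∅ with he | hne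
      · obtain ⟨h1, h2⟩ := Finset.union_eq_empty.mp he
        subst h1; subst h2
        simpa using haI
      · have hne' : (F₁ ∪ F₂).Nonempty := Finset.nonempty_iff_ne_empty.mpr hne
        set ν := (F₁ ∪ F₂).sup' hne' f with hν
        obtain ⟨y₀, hy₀, hy₀eq⟩ := Finset.exists_mem_eq_sup' hne' f
        have hνμ : ν < μ := by rw [hν, hy₀eq]; exact (hf y₀ hy₀).1
        have hνδ : ν < δ := lt_of_lt_of_le hνμ hμ
        have hν1δ : ν + 1 ≤ δ := Order.add_one_le_iff.mpr hνδ
        set G₁ := F₁.filter (fun y => f y = ν) with hG₁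
        set H₁ := F₁.filter (fun y => ¬ f y = ν) with hH₁
        set G₂ := F₂.filter (fun y => f y = ν) with hG₂
        set H₂ := F₂.filter (fun y => ¬ f y = ν) with hH₂
        -- indices in H's are < ν
        have hHlt : ∀ y ∈ H₁ ∪ H₂, f y < ν ∧ y ∈ J (f y) := by
          intro y hy
          have hy' : y ∈ F₁ ∪ F₂ ∧ ¬ f y = ν := by
            rcases Finset.mem_union.mp hy with h | h <;>
              simp only [hH₁, hH₂, Finset.mem_filter] at h
            · exact ⟨Finset.mem_union_left _ h.1, h.2⟩
            · exact ⟨Finset.mem_union_right _ h.1, h.2⟩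
          refine ⟨lt_of_le_of_ne ?_ hy'.2, (hf y hy'.1).2⟩
          exact Finset.le_sup' f hy'.1
        set b := H₁.inf id ⊓ H₂.inf (fun y => yᶜ) ⊓ a with hb
        have hbI : b ∉ I :=
          IH ν hνμ (le_of_lt hνδ) H₁ H₂ f hHlt
            (hdisj.mono (Finset.filter_subset _ _) (Finset.filter_subset _ _)) a ha haI
        have hBν : IsBooleanSubalgebra (Bc ν) := hsub ν (le_of_lt hνδ)
        have hBν1 : IsBooleanSubalgebra (Bc (ν + 1)) := hsub _ hν1δ
        -- b ∈ Bc ν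
        have hbmem : b ∈ Bc ν := by
          refine hBν.2.2.1 _ (hBν.2.2.1 _ ?_ _ ?_) _
            (hmono 0 ν (zero_le (a := ν)) (le_of_lt hνδ) ha)
          · refine inf_mem_sub hBν H₁ id ?_
            intro y hy
            have := hHlt y (Finset.mem_union_left _ hy)
            have h1 : f y + 1 ≤ ν := Order.add_one_le_iff.mpr this.1
            exact hmono _ ν h1 (le_of_lt hνδ) (hJsub (f y) (lt_trans this.1 hνδ) this.2)
          · refine inf_mem_sub hBν H₂ _ ?_
            intro y hy
            have := hHlt y (Finset.mem_union_right _ hy)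
            have h1 : f y + 1 ≤ ν := Order.add_one_le_iff.mpr this.1
            exact hBν.2.2.2.2 _
              (hmono _ ν h1 (le_of_lt hνδ) (hJsub (f y) (lt_trans this.1 hνδ) this.2))
        -- apply independence at ν
        have hGJ₁ : ↑G₁ ⊆ J ν := by
          intro y hy
          simp only [hG₁, Finset.coe_filter, Set.mem_setOf_eq] at hy
          exact hy.2 ▸ (hf y (Finset.mem_union_left _ hy.1)).2
        have hGJ₂ : ↑G₂ ⊆ J ν := by
          intro y hy
          simp only [hG₂, Finset.coe_filter, Set.mem_setOf_eq] at hy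
          exact hy.2 ▸ (hf y (Finset.mem_union_right _ hy.1)).2
        have hind := hJind ν hνδ G₁ G₂ hGJ₁ hGJ₂
          (hdisj.mono (Finset.filter_subset _ _) (Finset.filter_subset _ _))
          b (subset_genBA (Bc ν) hbmem) (fun h => hbI h.1)
        -- the element is in Bc (ν+1)
        have hGmem : G₁.inf id ⊓ G₂.inf (fun y => yᶜ) ⊓ b ∈ Bc (ν + 1) := by
          refine hBν1.2.2.1 _ (hBν1.2.2.1 _ ?_ _ ?_) _
            (hmono ν (ν + 1) (le_of_lt (Order.lt_add_one_iff.mpr le_rfl)) hν1δ hbmem)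
          · exact inf_mem_sub hBν1 G₁ id fun y hy => hJsub ν hνδ (hGJ₁ hy)
          · exact inf_mem_sub hBν1 G₂ _ fun y hy => hBν1.2.2.2.2 _ (hJsub ν hνδ (hGJ₂ hy))
        have hnotI : G₁.inf id ⊓ G₂.inf (fun y => yᶜ) ⊓ b ∉ I := fun h => hind ⟨h, hGmem⟩
        -- rearrange
        have hsplit1 : F₁.inf id = G₁.inf id ⊓ H₁.inf id := by
          conv_lhs => rw [← Finset.filter_union_filter_not_eq (fun y => f y = ν) F₁]
          rw [Finset.inf_union]
        have hsplit2 : F₂.inf (fun y => yᶜ) = G₂.inf (fun y => yᶜ) ⊓ H₂.inf (fun y => yᶜ) := by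
          conv_lhs => rw [← Finset.filter_union_filter_not_eq (fun y => f y = ν) F₂]
          rw [Finset.inf_union]
        have heq : F₁.inf id ⊓ F₂.inf (fun y => yᶜ) ⊓ a
            = G₁.inf id ⊓ G₂.inf (fun y => yᶜ) ⊓ b := by
          rw [hsplit1, hsplit2, hb]
          ac_rfl
        rw [heq]
        exact hnotI
  -- main proof
  intro F₁ F₂ hF₁ hF₂ hdisj a ha haI
  have ha0 : a ∈ Bc 0 := genBA_subset (hsub 0 (zero_le (a := δ))) subset_rfl ha
  have hex : ∀ y ∈ F₁ ∪ F₂, ∃ α, α < δ ∧ y ∈ J α := by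
    intro y hy
    have : y ∈ ⋃ α ∈ Set.Iio δ, J α := by
      rcases Finset.mem_union.mp hy with h | h
      · exact hF₁ h
      · exact hF₂ h
    simpa using this
  set f : B → Ordinal := fun y =>
    if h : ∃ α, α < δ ∧ y ∈ J α then h.choose else 0 with hfdef
  refine key δ le_rfl F₁ F₂ f ?_ hdisj a ha0 haI
  intro y hy
  have h := hex y hy
  simp only [hfdef, dif_pos h]
  exact h.choose_spec
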